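/- arXiv:2006.12096 — 2 statements merged into one kernel-verified Lean document; each statement's English description precedes it below -/
import Mathlib

section
/- Suppose g : ℝ² → ℝ is 1-periodic in y₁, and there exist constants N, C > 0 and γ ∈ (0,1) such that |g(y) − N| ≤ C e^{−γ y₂} for all y₂ > 0. Define g^ε(x) = g(x/ε) on Ω_ff = (0,L) × (0,h). Then ‖g^ε − N‖_{L²(Ω_ff)} ≤ C' ε^{1/2} for a constant C' independent of ε ∈ (0,1). -/
open MeasureTheory Set Real

/-- Stabilization estimate above the interface: if `g` is 1-periodic in `y₁`
and `|g(y) − N| ≤ C e^{−γ y₂}` for `y₂ > 0`, then `g^ε(x) = g(x/ε)` satisfies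
`‖g^ε − N‖_{L²((0,L)×(0,h))} ≤ C' ε^{1/2}` with `C'` independent of `ε ∈ (0,1)`. -/
theorem boundary_layer_stabilization_above (L h : ℝ) (hL : 0 < L) (hh : 0 < h)
    (g : ℝ × ℝ → ℝ) (hmeas : Measurable g)
    (hper : ∀ y : ℝ × ℝ, g (y.1 + 1, y.2) = g y)
    (N C γ : ℝ) (hC : 0 < C) (hγ : γ ∈ Ioo (0:ℝ) 1)
    (hdec : ∀ y : ℝ × ℝ, 0 < y.2 → |g y - N| ≤ C * Real.exp (-γ * y.2)) :
    ∃ C' > 0, ∀ ε ∈ Ioo (0:ℝ) 1,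
      Real.sqrt (∫ x in Ioo 0 L ×ˢ Ioo 0 h, (g (x.1 / ε, x.2 / ε) - N) ^ 2) ≤
        C' * Real.sqrt ε := by
  obtain ⟨hγ0, hγ1⟩ := hγ
  refine ⟨C * Real.sqrt (L / (2 * γ)), by positivity, ?_⟩
  rintro ε ⟨hε0, hε1⟩
  set k : ℝ := 2 * γ / ε with hk_def
  have hk : 0 < k := by positivity
  set S : Set (ℝ × ℝ) := Ioo 0 L ×ˢ Ioo 0 h with hS_def
  set f : ℝ × ℝ → ℝ := fun x => (g (x.1 / ε, x.2 / ε) - N) ^ 2 with hf_def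
  set bnd : ℝ × ℝ → ℝ := fun x => C ^ 2 * Real.exp (-k * x.2) with hbnd_def
  -- pointwise bound on S
  have hpt : ∀ x ∈ S, f x ≤ bnd x := by
    rintro ⟨x1, x2⟩ ⟨hx1, hx2⟩
    have hx2pos : 0 < x2 / ε := div_pos hx2.1 hε0
    have hb := hdec (x1 / ε, x2 / ε) hx2pos
    have habs : |g (x1 / ε, x2 / ε) - N| ≤ C * Real.exp (-γ * (x2 / ε)) := hb
    have hsq : (g (x1 / ε, x2 / ε) - N) ^ 2 ≤ (C * Real.exp (-γ * (x2 / ε))) ^ 2 := by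
      rw [← sq_abs]
      exact pow_le_pow_left₀ (abs_nonneg _) habs 2
    calc f (x1, x2) ≤ (C * Real.exp (-γ * (x2 / ε))) ^ 2 := hsq
      _ = C ^ 2 * Real.exp (-γ * (x2 / ε)) ^ 2 := by rw [mul_pow]
      _ = bnd (x1, x2) := by
          simp only [hbnd_def, ← Real.exp_nat_mul]
          congr 2
          push_cast
          rw [hk_def]
          ring
  have hSmeas : MeasurableSet S := (measurableSet_Ioo).prod measurableSet_Ioo
  -- integrability of bnd on S
  have hbnd_cont : Continuous bnd := by fun_prop
  have hbnd_int : IntegrableOn bnd S := by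
    apply (hbnd_cont.continuousOn.integrableOn_compact
      ((isCompact_Icc (a := (0:ℝ)) (b := L)).prod (isCompact_Icc (a := (0:ℝ)) (b := h)))).mono_set
    exact Set.prod_mono Ioo_subset_Icc_self Ioo_subset_Icc_self
  -- integrability of f on S
  have hf_meas : Measurable f := by
    apply Measurable.pow_const
    apply Measurable.sub_const
    exact hmeas.comp (by fun_prop)
  have hf_int : IntegrableOn f S := by
    apply Integrable.mono' hbnd_int hf_meas.aestronglyMeasurable.restrict
    refine (ae_restrict_iff' hSmeas).2 (ae_of_all _ fun x hx => ?_)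
    rw [Real.norm_eq_abs, abs_of_nonneg (sq_nonneg _)]
    exact hpt x hx
  have hmono : ∫ x in S, f x ≤ ∫ x in S, bnd x :=
    setIntegral_mono_on hf_int hbnd_int hSmeas hpt
  -- compute the integral of bnd
  have hexp_int : ∫ b in Ioo (0:ℝ) h, Real.exp (-k * b) ≤ 1 / k := by
    have h1 : ∫ b in Ioo (0:ℝ) h, Real.exp (-k * b)
        = ∫ b in (0:ℝ)..h, Real.exp (-k * b) := by
      rw [intervalIntegral.integral_of_le hh.le, integral_Ioc_eq_integral_Ioo]
    have h2 : ∫ b in (0:ℝ)..h, Real.exp (-k * b) = (1 - Real.exp (-k * h)) / k := by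
      have := intervalIntegral.integral_comp_mul_left (fun x => Real.exp x)
        (a := (0:ℝ)) (b := h) (c := -k) (by linarith)
      simp only [mul_zero, integral_exp, Real.exp_zero] at this
      rw [this, smul_eq_mul, inv_neg]
      ring
    rw [h1, h2]
    have hE : 0 < Real.exp (-k * h) := Real.exp_pos _
    gcongr
    linarith
  have hbnd_val : ∫ x in S, bnd x ≤ L * (C ^ 2 * (1 / k)) := by
    have hprod : ∫ x in S, bnd x
        = ∫ a in Ioo (0:ℝ) L, ∫ b in Ioo (0:ℝ) h, C ^ 2 * Real.exp (-k * b) := by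
      rw [hS_def, Measure.volume_eq_prod]
      refine setIntegral_prod bnd ?_
      rwa [← Measure.volume_eq_prod, ← hS_def]
    rw [hprod]
    rw [setIntegral_const]
    rw [Real.volume_real_Ioo_of_le hL.le, sub_zero, smul_eq_mul,
      integral_const_mul]
    apply mul_le_mul_of_nonneg_left _ hL.le
    exact mul_le_mul_of_nonneg_left hexp_int (by positivity)
  have hfinal : ∫ x in S, f x ≤ (C * Real.sqrt (L / (2 * γ))) ^ 2 * ε := by
    have hε : (0:ℝ) < ε := hε0
    have heq : (C * Real.sqrt (L / (2 * γ))) ^ 2 * ε = L * (C ^ 2 * (1 / k)) := by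
      rw [mul_pow, Real.sq_sqrt (by positivity : (0:ℝ) ≤ L / (2 * γ)), hk_def]
      field_simp
    rw [heq]
    exact le_trans hmono hbnd_val
  calc Real.sqrt (∫ x in S, f x)
      ≤ Real.sqrt ((C * Real.sqrt (L / (2 * γ))) ^ 2 * ε) := Real.sqrt_le_sqrt hfinal
    _ = C * Real.sqrt (L / (2 * γ)) * Real.sqrt ε := by
        rw [Real.sqrt_mul (sq_nonneg _), Real.sqrt_sq (by positivity)]
end

section
/- Let f : Z⁻ → ℝ be 1-periodic in y₁ with e^{γ|y₂|} f ∈ L²(Z⁻) for some γ ∈ (0,1), where Z⁻ ⊂ (0,1) × (−∞,0). Define f^ε(x) = f(x₁/ε, −(x₂+H)/ε) for x ∈ Ω_pm^ε = perforated (0,L)×(−H,0), extended by zero. Then ‖f^ε‖_{L²(Ω_pm)} ≤ C ε^{1/2}, and moreover for any δ > 0, ‖f^ε‖_{L²((0,L)×(−H+δ,0))} ≤ C_δ e^{−γδ/(2ε)}, i.e. f^ε is exponentially small away from the lower boundary {x₂ = −H}. -/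
open MeasureTheory Set Real
open scoped ENNReal

lemma lintegral_affine {h : ℝ → ℝ≥0∞} (hm : Measurable h) {a : ℝ} (b : ℝ) (ha : a ≠ 0)
    {s : Set ℝ} (hs : MeasurableSet s) :
    ∫⁻ x in ((fun x => a * x + b) ⁻¹' s), h (a * x + b) = ENNReal.ofReal |a⁻¹| * ∫⁻ x in s, h x := by
  have hψ : Measurable (fun x : ℝ => a * x + b) := (measurable_const_mul a).add_const b
  have hmap : Measure.map (fun x : ℝ => a * x + b) volume
      = ENNReal.ofReal |a⁻¹| • volume := by
    have h1 : (fun x : ℝ => a * x + b) = (fun x => x + b) ∘ (fun x => a * x) := rfl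
    rw [h1, ← Measure.map_map (measurable_add_const b) (measurable_const_mul a),
      Real.map_volume_mul_left ha, Measure.map_smul, map_add_right_eq_self]
  calc ∫⁻ x in ((fun x => a * x + b) ⁻¹' s), h (a * x + b)
      = ∫⁻ x, s.indicator h (a * x + b) := by
        rw [← lintegral_indicator (hψ hs)]
        refine lintegral_congr fun x => ?_
        by_cases hx : a * x + b ∈ s
        · simp [Set.indicator, hx]
        · simp [Set.indicator, hx]
    _ = ∫⁻ y, s.indicator h y ∂(Measure.map (fun x : ℝ => a * x + b) volume) :=
        (lintegral_map (hm.indicator hs) hψ).symm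
    _ = ENNReal.ofReal |a⁻¹| * ∫⁻ y, s.indicator h y := by
        rw [hmap, lintegral_smul_measure, smul_eq_mul]
    _ = ENNReal.ofReal |a⁻¹| * ∫⁻ y in s, h y := by rw [lintegral_indicator hs]

lemma hiter (s t : Set ℝ) (G : ℝ × ℝ → ℝ≥0∞) (hG : Measurable G) :
    ∫⁻ x in s ×ˢ t, G x = ∫⁻ a in s, ∫⁻ b in t, G (a, b) := by
  rw [Measure.volume_eq_prod, ← Measure.prod_restrict, lintegral_prod _ hG.aemeasurable]

lemma key_lemma (g : ℝ × ℝ → ℝ≥0∞) (hg : Measurable g)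
    (hper : ∀ y : ℝ × ℝ, g (y.1 + 1, y.2) = g y)
    (L H : ℝ) (hL : 0 < L) (hH : 0 < H) (ε : ℝ) (hε : ε ∈ Ioo (0:ℝ) 1) :
    ∫⁻ x in Ioo 0 L ×ˢ Ioo (-H) 0, g (x.1 / ε, -(x.2 + H) / ε)
      ≤ ENNReal.ofReal (ε * (L + 1)) * ∫⁻ y in Ioo (0:ℝ) 1 ×ˢ Iio (0:ℝ), g y := by
  obtain ⟨hε0, hε1⟩ := hε
  have hεne : ε ≠ 0 := ne_of_gt hε0
  have hik : (0:ℝ) < ε⁻¹ := inv_pos.mpr hε0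
  have hΦ : Measurable fun x : ℝ × ℝ => (x.1 / ε, -(x.2 + H) / ε) :=
    (measurable_fst.div_const ε).prodMk (((measurable_snd.add_const H).neg).div_const ε)
  have harith : ∀ a b : ℝ, g (a / ε, -(b + H) / ε)
      = g (ε⁻¹ * a + 0, (-ε⁻¹) * b + (-(H / ε))) := by
    intro a b
    rw [show a / ε = ε⁻¹ * a + 0 by ring, show -(b + H) / ε = (-ε⁻¹) * b + (-(H / ε)) by ring]
  have hper' : ∀ (n : ℕ) (a b : ℝ), g (a + n, b) = g (a, b) := by
    intro n
    induction n with
    | zero => simp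
    | succ m ih =>
      intro a b
      have h1 := hper (a + m, b)
      have h2 : a + ((m : ℝ) + 1) = (a + m) + 1 := by ring
      push_cast
      rw [h2, h1]
      exact ih a b
  set F : ℝ → ℝ≥0∞ := fun a => ∫⁻ b in Iio (0:ℝ), g (a, b) with hF
  set Fε : ℝ → ℝ≥0∞ := fun a => ∫⁻ b in Ioo (-(H / ε)) (0:ℝ), g (a, b) with hFε
  have hmF : Measurable F := Measurable.lintegral_prod_right (f := fun a b => g (a, b)) hg
  have hmFε : Measurable Fε := Measurable.lintegral_prod_right (f := fun a b => g (a, b)) hg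
  set N : ℕ := ⌈L / ε⌉₊ with hN
  set T : ℝ≥0∞ := ∫⁻ y in Ioo (0:ℝ) 1 ×ˢ Iio (0:ℝ), g y with hT
  have hT0 : T = ∫⁻ a in Ioo (0:ℝ) 1, F a := hiter _ _ _ hg
  have hset2 : Ioo (-H) (0:ℝ) = (fun x : ℝ => (-ε⁻¹) * x + (-(H / ε))) ⁻¹' Ioo (-(H / ε)) 0 := by
    ext t
    simp only [mem_preimage, mem_Ioo]
    rw [show (-ε⁻¹) * t + (-(H / ε)) = -((t + H) / ε) by ring]
    constructor
    · rintro ⟨h1, h2⟩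
      exact ⟨neg_lt_neg_iff.mpr ((div_lt_div_iff_of_pos_right hε0).mpr (by linarith)),
        neg_lt_zero.mpr (div_pos (by linarith) hε0)⟩
    · rintro ⟨h1, h2⟩
      have h1' : (t + H) / ε < H / ε := neg_lt_neg_iff.mp h1
      have h2' : 0 < (t + H) / ε := neg_lt_zero.mp h2
      constructor
      · nlinarith [mul_pos h2' hε0, div_mul_cancel₀ (t + H) hεne]
      · linarith [(div_lt_div_iff_of_pos_right hε0).mp h1']
  have hset1 : Ioo (0:ℝ) L = (fun x : ℝ => ε⁻¹ * x + 0) ⁻¹' Ioo 0 (L / ε) := by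
    ext t
    simp only [mem_preimage, mem_Ioo]
    rw [show ε⁻¹ * t + 0 = t / ε by ring]
    constructor
    · rintro ⟨h1, h2⟩
      exact ⟨div_pos h1 hε0, (div_lt_div_iff_of_pos_right hε0).mpr h2⟩
    · rintro ⟨h1, h2⟩
      constructor
      · nlinarith [mul_pos h1 hε0, div_mul_cancel₀ t hεne]
      · exact (div_lt_div_iff_of_pos_right hε0).mp h2
  have habs2 : |(-ε⁻¹)⁻¹| = ε := by
    rw [inv_neg, inv_inv, abs_neg, abs_of_pos hε0]
  have habs1 : |(ε⁻¹)⁻¹| = ε := by rw [inv_inv, abs_of_pos hε0]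
  have step : ∫⁻ x in Ioo 0 L ×ˢ Ioo (-H) 0, g (x.1 / ε, -(x.2 + H) / ε)
      = ENNReal.ofReal ε * (ENNReal.ofReal ε * ∫⁻ a in Ioo 0 (L / ε), Fε a) := by
    calc ∫⁻ x in Ioo 0 L ×ˢ Ioo (-H) 0, g (x.1 / ε, -(x.2 + H) / ε)
        = ∫⁻ a in Ioo (0:ℝ) L, ∫⁻ b in Ioo (-H) (0:ℝ), g (a / ε, -(b + H) / ε) :=
          hiter _ _ _ (hg.comp hΦ)
      _ = ∫⁻ a in Ioo (0:ℝ) L, ENNReal.ofReal ε * Fε (ε⁻¹ * a + 0) := by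
          refine lintegral_congr fun a => ?_
          simp only [harith]
          rw [hset2]
          have := lintegral_affine (h := fun y => g (ε⁻¹ * a + 0, y))
            (hg.comp measurable_prodMk_left) (a := -ε⁻¹) (-(H / ε))
            (neg_ne_zero.mpr (inv_ne_zero hεne)) (s := Ioo (-(H / ε)) 0) measurableSet_Ioo
          rw [habs2] at this
          exact this
      _ = ENNReal.ofReal ε * ∫⁻ a in Ioo (0:ℝ) L, Fε (ε⁻¹ * a + 0) :=
          lintegral_const_mul' _ _ ENNReal.ofReal_ne_top
      _ = ENNReal.ofReal ε * (ENNReal.ofReal ε * ∫⁻ a in Ioo 0 (L / ε), Fε a) := by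
          congr 1
          rw [hset1]
          have := lintegral_affine (h := Fε) hmFε (a := ε⁻¹) 0 (ne_of_gt hik)
            (s := Ioo (0:ℝ) (L / ε)) measurableSet_Ioo
          rw [habs1] at this
          exact this
  rw [step]
  have hblock : ∀ k : ℕ, ∫⁻ a in Ico ((k : ℝ)) ((k : ℝ) + 1), F a = T := by
    intro k
    have hsetk : Ico (0:ℝ) 1 = (fun x : ℝ => 1 * x + (k : ℝ)) ⁻¹' Ico (k : ℝ) ((k : ℝ) + 1) := by
      ext t
      simp only [mem_preimage, mem_Ico, one_mul]
      constructor
      · rintro ⟨h1, h2⟩; exact ⟨by linarith, by linarith⟩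
      · rintro ⟨h1, h2⟩; exact ⟨by linarith, by linarith⟩
    have h1 : ∫⁻ x in Ico (0:ℝ) 1, F (1 * x + (k : ℝ))
        = ∫⁻ a in Ico ((k : ℝ)) ((k : ℝ) + 1), F a := by
      rw [hsetk]
      have := lintegral_affine (h := F) hmF (a := (1:ℝ)) (k : ℝ) one_ne_zero
        (s := Ico ((k : ℝ)) ((k : ℝ) + 1)) measurableSet_Ico
      simpa using this
    have hFshift : ∀ x : ℝ, F (1 * x + (k : ℝ)) = F x := by
      intro x
      rw [one_mul]
      exact lintegral_congr fun b => hper' k x b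
    rw [← h1, lintegral_congr fun x => hFshift x,
      setLIntegral_congr (Ioo_ae_eq_Ico (μ := volume) (a := (0:ℝ)) (b := 1)).symm, ← hT0]
  have hbound : ∫⁻ a in Ioo 0 (L / ε), Fε a ≤ (N : ℝ≥0∞) * T := by
    have h1 : ∫⁻ a in Ioo 0 (L / ε), Fε a ≤ ∫⁻ a in Ioo 0 (L / ε), F a :=
      lintegral_mono fun a => lintegral_mono_set Ioo_subset_Iio_self
    have h2 : Ioo (0:ℝ) (L / ε) ⊆ ⋃ k : Fin N, Ico (((k : ℕ) : ℝ)) (((k : ℕ) : ℝ) + 1) := by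
      intro a ha
      have ha0 : (0:ℝ) ≤ a := ha.1.le
      have hlt : ⌊a⌋₊ < N := by
        rw [hN]
        exact (Nat.floor_lt ha0).mpr (lt_of_lt_of_le ha.2 (Nat.le_ceil _))
      exact mem_iUnion.mpr ⟨⟨⌊a⌋₊, hlt⟩, ⟨Nat.floor_le ha0, Nat.lt_floor_add_one a⟩⟩
    calc ∫⁻ a in Ioo 0 (L / ε), Fε a
        ≤ ∫⁻ a in Ioo 0 (L / ε), F a := h1
      _ ≤ ∫⁻ a in ⋃ k : Fin N, Ico (((k : ℕ) : ℝ)) (((k : ℕ) : ℝ) + 1), F a :=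
          lintegral_mono_set h2
      _ ≤ ∑' k : Fin N, ∫⁻ a in Ico (((k : ℕ) : ℝ)) (((k : ℕ) : ℝ) + 1), F a :=
          lintegral_iUnion_le _ _
      _ = ∑ k : Fin N, ∫⁻ a in Ico (((k : ℕ) : ℝ)) (((k : ℕ) : ℝ) + 1), F a := tsum_fintype _
      _ = (N : ℝ≥0∞) * T := by
          simp only [hblock]
          rw [Finset.sum_const, Finset.card_univ, Fintype.card_fin, nsmul_eq_mul]
  calc ENNReal.ofReal ε * (ENNReal.ofReal ε * ∫⁻ a in Ioo 0 (L / ε), Fε a)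
      ≤ ENNReal.ofReal ε * (ENNReal.ofReal ε * ((N : ℝ≥0∞) * T)) :=
        mul_le_mul_right (mul_le_mul_right hbound _) _
    _ ≤ ENNReal.ofReal (ε * (L + 1)) * T := by
        rw [← mul_assoc, ← mul_assoc]
        refine mul_le_mul_left ?_ T
        rw [← ENNReal.ofReal_mul hε0.le, ← ENNReal.ofReal_natCast N,
          ← ENNReal.ofReal_mul (by positivity)]
        apply ENNReal.ofReal_le_ofReal
        have hNle : (N : ℝ) ≤ L / ε + 1 := le_of_lt (Nat.ceil_lt_add_one (by positivity))
        have h1 : ε * (N : ℝ) ≤ ε * (L / ε + 1) := mul_le_mul_of_nonneg_left hNle hε0.le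
        have h2 : ε * (L / ε + 1) = L + ε := by field_simp
        have h3 : ε * (N : ℝ) ≤ L + ε := h2 ▸ h1
        nlinarith [mul_le_mul_of_nonneg_left h3 hε0.le]

/-- Outer boundary layer scaling: if `f` is 1-periodic in `y₁` with
`e^{γ|y₂|} f ∈ L²((0,1) × (−∞,0))`, then the rescaling
`f^ε(x) = f(x₁/ε, −(x₂+H)/ε)` anchored at the bottom boundary satisfies
`‖f^ε‖_{L²((0,L)×(−H,0))} ≤ C' ε^{1/2}`, and for every `δ > 0` it is
exponentially small on `(0,L) × (−H+δ, 0)`: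
`‖f^ε‖_{L²} ≤ C_δ e^{−γδ/(2ε)}`. -/
theorem outer_boundary_layer_scaling (L H : ℝ) (hL : 0 < L) (hH : 0 < H)
    (f : ℝ × ℝ → ℝ) (hmeas : Measurable f)
    (hper : ∀ y : ℝ × ℝ, f (y.1 + 1, y.2) = f y)
    (γ : ℝ) (hγ : γ ∈ Ioo (0:ℝ) 1)
    (hwL2 : IntegrableOn (fun y : ℝ × ℝ => (Real.exp (γ * |y.2|) * f y) ^ 2)
      (Ioo (0:ℝ) 1 ×ˢ Iio (0:ℝ))) :
    (∃ C' > 0, ∀ ε ∈ Ioo (0:ℝ) 1,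
      Real.sqrt (∫ x in Ioo 0 L ×ˢ Ioo (-H) 0,
          (f (x.1 / ε, -(x.2 + H) / ε)) ^ 2) ≤ C' * Real.sqrt ε) ∧
    (∀ δ > 0, ∃ Cδ > 0, ∀ ε ∈ Ioo (0:ℝ) 1,
      Real.sqrt (∫ x in Ioo 0 L ×ˢ Ioo (-H + δ) 0,
          (f (x.1 / ε, -(x.2 + H) / ε)) ^ 2) ≤
        Cδ * Real.exp (-(γ * δ) / (2 * ε))) := by
  have hγ0 : 0 < γ := hγ.1
  -- the weight function
  set W : ℝ × ℝ → ℝ := fun y => (Real.exp (γ * |y.2|) * f y) ^ 2 with hWdef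
  have hW : Measurable W := ((Real.measurable_exp.comp (measurable_snd.abs.const_mul γ)).mul
    hmeas).pow_const 2
  have hWper : ∀ y : ℝ × ℝ, W (y.1 + 1, y.2) = W y := by
    intro y
    simp only [hWdef, hper y]
  set Mw : ℝ≥0∞ := ∫⁻ y in Ioo (0:ℝ) 1 ×ˢ Iio (0:ℝ), ENNReal.ofReal (W y) with hMwdef
  have hMwne : Mw ≠ ⊤ := hwL2.lintegral_lt_top.ne
  have hMw0 : 0 ≤ Mw.toReal := ENNReal.toReal_nonneg
  have hsqW : ∀ y : ℝ × ℝ, (f y) ^ 2 ≤ W y := by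
    intro y
    have hE : 1 ≤ Real.exp (γ * |y.2|) :=
      Real.one_le_exp (mul_nonneg hγ0.le (abs_nonneg _))
    have hE2 : (1:ℝ) ≤ Real.exp (γ * |y.2|) ^ 2 := one_le_pow₀ hE
    calc (f y) ^ 2 = 1 * (f y) ^ 2 := (one_mul _).symm
      _ ≤ Real.exp (γ * |y.2|) ^ 2 * (f y) ^ 2 :=
          mul_le_mul_of_nonneg_right hE2 (sq_nonneg _)
      _ = W y := (mul_pow _ _ 2).symm
  set C0 : ℝ := Real.sqrt ((L + 1) * Mw.toReal) with hC0def
  have hC00 : 0 ≤ C0 := Real.sqrt_nonneg _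
  constructor
  · refine ⟨max 1 C0, lt_of_lt_of_le one_pos (le_max_left _ _), ?_⟩
    intro ε hε
    obtain ⟨hε0, hε1⟩ := hε
    have hΦ : Measurable fun x : ℝ × ℝ => (x.1 / ε, -(x.2 + H) / ε) :=
      (measurable_fst.div_const ε).prodMk (((measurable_snd.add_const H).neg).div_const ε)
    have hconv : ∫ x in Ioo 0 L ×ˢ Ioo (-H) 0, (f (x.1 / ε, -(x.2 + H) / ε)) ^ 2
        = (∫⁻ x in Ioo 0 L ×ˢ Ioo (-H) 0,
            ENNReal.ofReal ((f (x.1 / ε, -(x.2 + H) / ε)) ^ 2)).toReal :=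
      integral_eq_lintegral_of_nonneg_ae (ae_of_all _ fun x => sq_nonneg _)
        ((hmeas.comp hΦ).pow_const 2).aestronglyMeasurable
    have hkey : (∫⁻ x in Ioo 0 L ×ˢ Ioo (-H) 0,
          ENNReal.ofReal ((f (x.1 / ε, -(x.2 + H) / ε)) ^ 2))
        ≤ ENNReal.ofReal (ε * (L + 1)) *
            ∫⁻ y in Ioo (0:ℝ) 1 ×ˢ Iio (0:ℝ), ENNReal.ofReal ((f y) ^ 2) :=
      key_lemma (fun y => ENNReal.ofReal ((f y) ^ 2))
        ((hmeas.pow_const 2).ennreal_ofReal)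
        (fun y => by simp only [hper y]) L H hL hH ε ⟨hε0, hε1⟩
    have hle2 : (∫⁻ y in Ioo (0:ℝ) 1 ×ˢ Iio (0:ℝ), ENNReal.ofReal ((f y) ^ 2)) ≤ Mw :=
      lintegral_mono fun y => ENNReal.ofReal_le_ofReal (hsqW y)
    have htot : (∫⁻ x in Ioo 0 L ×ˢ Ioo (-H) 0,
          ENNReal.ofReal ((f (x.1 / ε, -(x.2 + H) / ε)) ^ 2))
        ≤ ENNReal.ofReal (ε * (L + 1) * Mw.toReal) := by
      calc _ ≤ ENNReal.ofReal (ε * (L + 1)) *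
              ∫⁻ y in Ioo (0:ℝ) 1 ×ˢ Iio (0:ℝ), ENNReal.ofReal ((f y) ^ 2) := hkey
        _ ≤ ENNReal.ofReal (ε * (L + 1)) * Mw := mul_le_mul_right hle2 _
        _ = ENNReal.ofReal (ε * (L + 1) * Mw.toReal) := by
            rw [show ENNReal.ofReal (ε * (L + 1) * Mw.toReal)
                = ENNReal.ofReal (ε * (L + 1)) * ENNReal.ofReal Mw.toReal from
              ENNReal.ofReal_mul (by positivity), ENNReal.ofReal_toReal hMwne]
    have htr : (∫⁻ x in Ioo 0 L ×ˢ Ioo (-H) 0,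
          ENNReal.ofReal ((f (x.1 / ε, -(x.2 + H) / ε)) ^ 2)).toReal
        ≤ ε * (L + 1) * Mw.toReal :=
      ENNReal.toReal_le_of_le_ofReal (by positivity) htot
    rw [hconv]
    calc Real.sqrt _ ≤ Real.sqrt (ε * ((L + 1) * Mw.toReal)) := by
          apply Real.sqrt_le_sqrt
          rw [← mul_assoc]
          exact htr
      _ = Real.sqrt ε * C0 := by rw [Real.sqrt_mul hε0.le, hC0def]
      _ ≤ Real.sqrt ε * max 1 C0 :=
          mul_le_mul_of_nonneg_left (le_max_right _ _) (Real.sqrt_nonneg _)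
      _ = max 1 C0 * Real.sqrt ε := mul_comm _ _
  · intro δ hδ
    refine ⟨max 1 C0, lt_of_lt_of_le one_pos (le_max_left _ _), ?_⟩
    intro ε hε
    obtain ⟨hε0, hε1⟩ := hε
    have hεne : ε ≠ 0 := ne_of_gt hε0
    have hΦ : Measurable fun x : ℝ × ℝ => (x.1 / ε, -(x.2 + H) / ε) :=
      (measurable_fst.div_const ε).prodMk (((measurable_snd.add_const H).neg).div_const ε)
    set c : ℝ := 2 * γ * δ / ε with hcdef
    have hconv : ∫ x in Ioo 0 L ×ˢ Ioo (-H + δ) 0, (f (x.1 / ε, -(x.2 + H) / ε)) ^ 2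
        = (∫⁻ x in Ioo 0 L ×ˢ Ioo (-H + δ) 0,
            ENNReal.ofReal ((f (x.1 / ε, -(x.2 + H) / ε)) ^ 2)).toReal :=
      integral_eq_lintegral_of_nonneg_ae (ae_of_all _ fun x => sq_nonneg _)
        ((hmeas.comp hΦ).pow_const 2).aestronglyMeasurable
    -- pointwise exponential bound on the region
    have hpt : ∀ x ∈ Ioo 0 L ×ˢ Ioo (-H + δ) (0:ℝ),
        ENNReal.ofReal ((f (x.1 / ε, -(x.2 + H) / ε)) ^ 2)
          ≤ ENNReal.ofReal (Real.exp (-c)) *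
              ENNReal.ofReal (W (x.1 / ε, -(x.2 + H) / ε)) := by
      intro x hx
      obtain ⟨hx1, hx2⟩ := hx
      set b : ℝ := -(x.2 + H) / ε with hbdef
      have hxH : δ < x.2 + H := by
        have := hx2.1
        linarith [hx2.1]
      have hb0 : b < 0 := by
        rw [hbdef, neg_div]
        exact neg_lt_zero.mpr (div_pos (by linarith) hε0)
      have habsb : δ / ε ≤ |b| := by
        rw [abs_of_neg hb0, hbdef, neg_div, neg_neg]
        exact le_of_lt ((div_lt_div_iff_of_pos_right hε0).mpr hxH)
      have h2 : 1 ≤ Real.exp (-c) * Real.exp (2 * (γ * |b|)) := by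
        rw [← Real.exp_add]
        apply Real.one_le_exp
        have h3 : γ * (δ / ε) ≤ γ * |b| := mul_le_mul_of_nonneg_left habsb hγ0.le
        rw [hcdef]
        have h4 : 2 * γ * δ / ε = 2 * (γ * (δ / ε)) := by ring
        rw [h4]
        linarith
      have h1 : Real.exp (γ * |b|) ^ 2 = Real.exp (2 * (γ * |b|)) := by
        rw [sq, ← Real.exp_add]
        ring_nf
      have hreal : (f (x.1 / ε, b)) ^ 2 ≤ Real.exp (-c) * W (x.1 / ε, b) := by
        have hWb : W (x.1 / ε, b) = Real.exp (γ * |b|) ^ 2 * (f (x.1 / ε, b)) ^ 2 := by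
          rw [hWdef]
          exact mul_pow _ _ 2
        calc (f (x.1 / ε, b)) ^ 2 = 1 * (f (x.1 / ε, b)) ^ 2 := (one_mul _).symm
          _ ≤ (Real.exp (-c) * Real.exp (2 * (γ * |b|))) * (f (x.1 / ε, b)) ^ 2 :=
              mul_le_mul_of_nonneg_right h2 (sq_nonneg _)
          _ = Real.exp (-c) * W (x.1 / ε, b) := by rw [hWb, h1]; ring
      calc ENNReal.ofReal ((f (x.1 / ε, b)) ^ 2)
          ≤ ENNReal.ofReal (Real.exp (-c) * W (x.1 / ε, b)) :=
            ENNReal.ofReal_le_ofReal hreal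
        _ = ENNReal.ofReal (Real.exp (-c)) * ENNReal.ofReal (W (x.1 / ε, b)) :=
            ENNReal.ofReal_mul (Real.exp_nonneg _)
    have hkeyW : (∫⁻ x in Ioo 0 L ×ˢ Ioo (-H) 0,
          ENNReal.ofReal (W (x.1 / ε, -(x.2 + H) / ε)))
        ≤ ENNReal.ofReal (ε * (L + 1)) * Mw :=
      key_lemma (fun y => ENNReal.ofReal (W y)) hW.ennreal_ofReal
        (fun y => by simp only [hWper y]) L H hL hH ε ⟨hε0, hε1⟩
    have htot : (∫⁻ x in Ioo 0 L ×ˢ Ioo (-H + δ) 0,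
          ENNReal.ofReal ((f (x.1 / ε, -(x.2 + H) / ε)) ^ 2))
        ≤ ENNReal.ofReal (Real.exp (-c) * ((L + 1) * Mw.toReal)) := by
      calc (∫⁻ x in Ioo 0 L ×ˢ Ioo (-H + δ) 0,
            ENNReal.ofReal ((f (x.1 / ε, -(x.2 + H) / ε)) ^ 2))
          ≤ ∫⁻ x in Ioo 0 L ×ˢ Ioo (-H + δ) 0,
              ENNReal.ofReal (Real.exp (-c)) *
                ENNReal.ofReal (W (x.1 / ε, -(x.2 + H) / ε)) :=
            setLIntegral_mono (measurable_const.mul (hW.comp hΦ).ennreal_ofReal) hpt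
        _ = ENNReal.ofReal (Real.exp (-c)) *
              ∫⁻ x in Ioo 0 L ×ˢ Ioo (-H + δ) 0,
                ENNReal.ofReal (W (x.1 / ε, -(x.2 + H) / ε)) :=
            lintegral_const_mul' _ _ ENNReal.ofReal_ne_top
        _ ≤ ENNReal.ofReal (Real.exp (-c)) *
              ∫⁻ x in Ioo 0 L ×ˢ Ioo (-H) 0,
                ENNReal.ofReal (W (x.1 / ε, -(x.2 + H) / ε)) :=
            mul_le_mul_right (lintegral_mono_set
              (prod_mono_right (Ioo_subset_Ioo_left (by linarith)))) _
        _ ≤ ENNReal.ofReal (Real.exp (-c)) * (ENNReal.ofReal (ε * (L + 1)) * Mw) :=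
            mul_le_mul_right hkeyW _
        _ ≤ ENNReal.ofReal (Real.exp (-c)) * (ENNReal.ofReal (L + 1) * Mw) := by
            refine mul_le_mul_right (mul_le_mul_left (ENNReal.ofReal_le_ofReal ?_) _) _
            nlinarith
        _ = ENNReal.ofReal (Real.exp (-c) * ((L + 1) * Mw.toReal)) := by
            rw [show ENNReal.ofReal (Real.exp (-c) * ((L + 1) * Mw.toReal))
                = ENNReal.ofReal (Real.exp (-c)) *
                  (ENNReal.ofReal (L + 1) * ENNReal.ofReal Mw.toReal) from by
              rw [ENNReal.ofReal_mul (Real.exp_nonneg _), ENNReal.ofReal_mul (by linarith)],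
              ENNReal.ofReal_toReal hMwne]
    have htr : (∫⁻ x in Ioo 0 L ×ˢ Ioo (-H + δ) 0,
          ENNReal.ofReal ((f (x.1 / ε, -(x.2 + H) / ε)) ^ 2)).toReal
        ≤ Real.exp (-c) * ((L + 1) * Mw.toReal) :=
      ENNReal.toReal_le_of_le_ofReal (by positivity) htot
    have hsqexp : Real.sqrt (Real.exp (-c)) = Real.exp (-(γ * δ / ε)) := by
      rw [show Real.exp (-c) = (Real.exp (-(γ * δ / ε))) ^ 2 by
        rw [sq, ← Real.exp_add, hcdef]; ring_nf]
      exact Real.sqrt_sq (Real.exp_pos _).le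
    have hexple : Real.exp (-(γ * δ / ε)) ≤ Real.exp (-(γ * δ) / (2 * ε)) := by
      apply Real.exp_le_exp.mpr
      rw [show -(γ * δ) / (2 * ε) = -(γ * δ / (2 * ε)) by ring]
      rw [neg_le_neg_iff]
      exact (div_le_div_iff_of_pos_left (by positivity) (by linarith) hε0).mpr (by linarith)
    rw [hconv]
    calc Real.sqrt _ ≤ Real.sqrt (Real.exp (-c) * ((L + 1) * Mw.toReal)) :=
          Real.sqrt_le_sqrt htr
      _ = Real.exp (-(γ * δ / ε)) * C0 := by
          rw [Real.sqrt_mul (Real.exp_nonneg _), hsqexp, hC0def]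
      _ ≤ Real.exp (-(γ * δ) / (2 * ε)) * C0 :=
          mul_le_mul_of_nonneg_right hexple hC00
      _ ≤ Real.exp (-(γ * δ) / (2 * ε)) * max 1 C0 :=
          mul_le_mul_of_nonneg_left (le_max_right _ _) (Real.exp_nonneg _)
      _ = max 1 C0 * Real.exp (-(γ * δ) / (2 * ε)) := mul_comm _ _
end
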